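/- Define D_n(z) = ∏_{j≥1} S_{⌊(n-2)/2^j⌋}(z), where S_m(z) = ∏_{i=1}^m (1 + z^i). Then D_n(z) = ∏_{j≥1} Φ_{2j}(z)^{⌊(n-2)/(2j)⌋}, where Φ_m is the m-th cyclotomic polynomial. -/

import Mathlib

open Polynomial

noncomputable def S (n : ℕ) : Polynomial ℤ := ∏ i ∈ Finset.Icc 1 n, (1 + X ^ i)

noncomputable def D (n : ℕ) : Polynomial ℤ := ∏ᶠ j : ℕ, S ((n - 2) / 2 ^ (j + 1))

lemma X_pow_sub_one_ne_zero' (N : ℕ) (h : 0 < N) : ((X:ℤ[X])^N - 1) ≠ 0 := by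
  have := monic_X_pow_sub_C (1:ℤ) (by omega : N ≠ 0)
  simpa using this.ne_zero

lemma one_add_X_pow_eq (N : ℕ) (hN : 1 ≤ N) :
    (1 + X ^ N : Polynomial ℤ) =
      ∏ k ∈ (Finset.Icc 1 N).filter (fun k => k ∣ N ∧ Odd (N / k)), cyclotomic (2*k) ℤ := by
  have hXN : ((X:ℤ[X])^N - 1) ≠ 0 := X_pow_sub_one_ne_zero' N hN
  have hsub : Nat.divisors N ⊆ Nat.divisors (2*N) :=
    Nat.divisors_subset_of_dvd (by omega) ⟨2, by ring⟩
  have hbij : ∏ k ∈ (Finset.Icc 1 N).filter (fun k => k ∣ N ∧ Odd (N / k)), cyclotomic (2*k) ℤ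
      = ∏ d ∈ (2*N).divisors \ N.divisors, cyclotomic d ℤ := by
    refine Finset.prod_bij (fun k _ => 2*k) ?_ ?_ ?_ ?_
    · intro k hk
      simp only [Finset.mem_filter, Finset.mem_Icc] at hk
      obtain ⟨⟨hk1, hk2⟩, hkd, hko⟩ := hk
      simp only [Finset.mem_sdiff, Nat.mem_divisors]
      refine ⟨⟨mul_dvd_mul_left 2 hkd, by omega⟩, ?_⟩
      rintro ⟨h2k, -⟩
      obtain ⟨t, ht⟩ := h2k
      have : N / k = 2 * t := by
        subst ht
        rw [mul_assoc, mul_comm 2 (k*t)]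
        rw [mul_assoc, Nat.mul_div_cancel_left _ (by omega : 0 < k)]
        ring
      rw [this] at hko
      exact (Nat.not_odd_iff_even.mpr ⟨t, by ring⟩) hko
    · intro a ha b hb hab
      omega
    · intro d hd
      simp only [Finset.mem_sdiff, Nat.mem_divisors] at hd
      obtain ⟨⟨hd2N, h2N0⟩, hdN⟩ := hd
      have hN0 : N ≠ 0 := by omega
      have hdeven : 2 ∣ d := by
        by_contra hodd
        have hcop : Nat.Coprime d 2 := by
          rw [Nat.coprime_two_right, Nat.odd_iff]
          omega
        exact hdN ⟨hcop.dvd_of_dvd_mul_left hd2N, hN0⟩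
      obtain ⟨k, hk⟩ := hdeven
      have hkN : k ∣ N := by
        subst hk
        exact (mul_dvd_mul_iff_left (two_ne_zero)).mp hd2N
      have hk1 : 1 ≤ k := by
        rcases Nat.eq_zero_or_pos k with h | h
        · subst h; simp at hkN; omega
        · exact h
      refine ⟨k, ?_, hk.symm⟩
      simp only [Finset.mem_filter, Finset.mem_Icc]
      refine ⟨⟨hk1, Nat.le_of_dvd (by omega) hkN⟩, hkN, ?_⟩
      rw [Nat.odd_iff]
      by_contra h
      have : Even (N / k) := Nat.even_iff.mpr (by omega)
      obtain ⟨t, ht⟩ := this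
      have h5 := Nat.div_mul_cancel hkN
      rw [ht] at h5
      have hNt : N = 2 * k * t := by rw [← h5]; ring
      exact hdN ⟨hk ▸ ⟨t, hNt⟩, hN0⟩
    · intro k hk; rfl
  apply mul_left_cancel₀ hXN
  have h2N : ∏ d ∈ (2*N).divisors, cyclotomic d ℤ = X^(2*N) - 1 :=
    prod_cyclotomic_eq_X_pow_sub_one (by omega) ℤ
  have hN' : ∏ d ∈ N.divisors, cyclotomic d ℤ = (X:ℤ[X])^N - 1 :=
    prod_cyclotomic_eq_X_pow_sub_one (by omega) ℤ
  have hsplit := Finset.prod_sdiff (f := fun d => cyclotomic d ℤ) hsub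
  calc ((X:ℤ[X])^N - 1) * (1 + X ^ N) = X^(2*N) - 1 := by
        rw [two_mul, pow_add]; ring
    _ = (∏ d ∈ (2*N).divisors \ N.divisors, cyclotomic d ℤ) * ((X:ℤ[X])^N - 1) := by
        rw [← h2N, ← hsplit, hN']
    _ = ((X:ℤ[X])^N - 1) * ∏ k ∈ (Finset.Icc 1 N).filter (fun k => k ∣ N ∧ Odd (N / k)),
          cyclotomic (2*k) ℤ := by rw [hbij, mul_comm]

lemma exp_id (M k : ℕ) (hk : 1 ≤ k) :
    (M+1)/k - (M+1)/(2*k) =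
      (M/k - M/(2*k)) + (if k ∣ (M+1) ∧ Odd ((M+1)/k) then 1 else 0) := by
  have h1 : (M+1)/k = M/k + (if k ∣ M+1 then 1 else 0) := Nat.succ_div
  have h2 : (M+1)/(2*k) = M/(2*k) + (if 2*k ∣ M+1 then 1 else 0) := Nat.succ_div
  have hle : M/(2*k) ≤ M/k := Nat.div_le_div_left (by omega) (by omega)
  by_cases hd : k ∣ M+1
  · by_cases hd2 : 2*k ∣ M+1
    · have hno : ¬ Odd ((M+1)/k) := by
        obtain ⟨t, ht⟩ := hd2
        rw [Nat.not_odd_iff_even, ht, mul_assoc, mul_comm 2 (k*t), mul_assoc,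
          Nat.mul_div_cancel_left _ (by omega : 0 < k)]
        exact ⟨t, by ring⟩
      rw [if_neg (fun h => hno h.2)]
      rw [if_pos hd] at h1
      rw [if_pos hd2] at h2
      omega
    · have hodd : Odd ((M+1)/k) := by
        rw [Nat.odd_iff]
        by_contra h
        have : Even ((M+1)/k) := Nat.even_iff.mpr (by omega)
        obtain ⟨t, ht⟩ := this
        have h5 := Nat.div_mul_cancel hd
        rw [ht] at h5
        exact hd2 ⟨t, by rw [← h5]; ring⟩
      rw [if_pos ⟨hd, hodd⟩]
      rw [if_pos hd] at h1
      rw [if_neg hd2] at h2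
      omega
  · have hd2 : ¬ 2*k ∣ M+1 := fun h => hd (dvd_trans ⟨2, by ring⟩ h)
    rw [if_neg (fun h => hd h.1)]
    rw [if_neg hd] at h1
    rw [if_neg hd2] at h2
    omega

lemma S_eq (M : ℕ) :
    S M = ∏ k ∈ Finset.Icc 1 M, (cyclotomic (2*k) ℤ) ^ (M / k - M / (2*k)) := by
  induction M with
  | zero => simp [S]
  | succ M ih =>
    have hIcc : Finset.Icc 1 (M+1) = insert (M+1) (Finset.Icc 1 M) := by
      ext x
      simp only [Finset.mem_Icc, Finset.mem_insert]
      omega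
    have hstep : S (M+1) = S M * (1 + X ^ (M+1)) := by
      rw [S, S, hIcc, Finset.prod_insert (by simp), mul_comm]
    rw [hstep, ih, one_add_X_pow_eq (M+1) (by omega)]
    have hrw : ∀ k ∈ Finset.Icc 1 (M+1),
        (cyclotomic (2*k) ℤ) ^ ((M+1) / k - (M+1) / (2*k)) =
        (cyclotomic (2*k) ℤ) ^ (M/k - M/(2*k)) *
        (cyclotomic (2*k) ℤ) ^ (if k ∣ (M+1) ∧ Odd ((M+1)/k) then 1 else 0) := by
      intro k hk
      simp only [Finset.mem_Icc] at hk
      rw [← pow_add, exp_id M k hk.1]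
    rw [Finset.prod_congr rfl hrw, Finset.prod_mul_distrib]
    congr 1
    · rw [hIcc, Finset.prod_insert (by simp)]
      have hz : M / (M+1) = 0 := Nat.div_eq_of_lt (by omega)
      have hz2 : M / (2*(M+1)) = 0 := Nat.div_eq_of_lt (by omega)
      rw [hz, hz2, pow_zero, one_mul]
    · rw [Finset.prod_filter]
      exact Finset.prod_congr rfl (fun k _ => by split <;> simp)

lemma tele (f : ℕ → ℕ) (hf : ∀ j, f (j+1) ≤ f j) (m : ℕ) :
    ∑ j ∈ Finset.range m, (f j - f (j+1)) = f 0 - f m := by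
  have hmono : Antitone f := antitone_nat_of_succ_le hf
  induction m with
  | zero => simp
  | succ m ihm =>
    rw [Finset.sum_range_succ, ihm]
    have h1 : f m ≤ f 0 := hmono (by omega)
    have h2 : f (m+1) ≤ f m := hf m
    omega

theorem D_eq_prod_cyclotomic (n : ℕ) (hn : 2 ≤ n) :
    D n = ∏ᶠ j : ℕ, (cyclotomic (2 * (j + 1)) ℤ) ^ ((n - 2) / (2 * (j + 1))) := by
  set m := n - 2 with hm
  have hL : D n = ∏ j ∈ Finset.range m, S (m / 2 ^ (j + 1)) := by
    rw [D]
    apply finprod_eq_prod_of_mulSupport_subset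
    intro j hj
    simp only [Function.mem_mulSupport] at hj
    by_contra hjm
    simp only [Finset.coe_range, Set.mem_Iio, not_lt] at hjm
    have hz : m / 2 ^ (j+1) = 0 := by
      apply Nat.div_eq_of_lt
      calc m < 2 ^ m := Nat.lt_two_pow_self
        _ ≤ 2 ^ (j+1) := Nat.pow_le_pow_right (by omega) (by omega)
    rw [hz] at hj
    exact hj (by simp [S])
  have hR : (∏ᶠ j : ℕ, (cyclotomic (2 * (j + 1)) ℤ) ^ (m / (2 * (j + 1)))) =
      ∏ j ∈ Finset.range m, (cyclotomic (2 * (j + 1)) ℤ) ^ (m / (2 * (j + 1))) := by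
    apply finprod_eq_prod_of_mulSupport_subset
    intro j hj
    simp only [Function.mem_mulSupport] at hj
    by_contra hjm
    simp only [Finset.coe_range, Set.mem_Iio, not_lt] at hjm
    have hz : m / (2*(j+1)) = 0 := Nat.div_eq_of_lt (by omega)
    rw [hz, pow_zero] at hj
    exact hj rfl
  rw [hL, hR]
  have hext : ∀ j ∈ Finset.range m,
      S (m / 2 ^ (j+1)) =
      ∏ k ∈ Finset.Icc 1 m,
        (cyclotomic (2*k) ℤ) ^ (m / 2^(j+1) / k - m / 2^(j+2) / k) := by
    intro j _
    rw [S_eq]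
    have hsub : Finset.Icc 1 (m / 2^(j+1)) ⊆ Finset.Icc 1 m :=
      Finset.Icc_subset_Icc_right (Nat.div_le_self _ _)
    have hrw : ∀ k ∈ Finset.Icc 1 (m / 2^(j+1)),
        (cyclotomic (2*k) ℤ) ^ (m / 2^(j+1) / k - m / 2^(j+1) / (2*k)) =
        (cyclotomic (2*k) ℤ) ^ (m / 2^(j+1) / k - m / 2^(j+2) / k) := by
      intro k _
      congr 2
      rw [Nat.div_div_eq_div_mul, Nat.div_div_eq_div_mul,
        show 2^(j+1) * (2*k) = 2^(j+2) * k by rw [pow_succ]; ring]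
    rw [Finset.prod_congr rfl hrw]
    apply Finset.prod_subset hsub
    intro k hk hknot
    simp only [Finset.mem_Icc] at hk hknot
    have hklt : m / 2^(j+1) < k := by omega
    have hz1 : m / 2^(j+1) / k = 0 := Nat.div_eq_of_lt hklt
    have hz2 : m / 2^(j+2) / k = 0 := by
      apply Nat.div_eq_of_lt
      calc m / 2^(j+2) ≤ m / 2^(j+1) :=
            Nat.div_le_div_left (Nat.pow_le_pow_right (by norm_num) (by omega)) (by positivity)
        _ < k := hklt
    rw [hz1, hz2, pow_zero]
  rw [Finset.prod_congr rfl hext, Finset.prod_comm]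
  have hinner : ∀ k ∈ Finset.Icc 1 m,
      ∏ j ∈ Finset.range m,
        (cyclotomic (2*k) ℤ) ^ (m / 2^(j+1) / k - m / 2^(j+2) / k) =
      (cyclotomic (2*k) ℤ) ^ (m / (2*k)) := by
    intro k hk
    simp only [Finset.mem_Icc] at hk
    rw [Finset.prod_pow_eq_pow_sum]
    congr 1
    have := tele (fun j => m / 2^(j+1) / k)
      (fun j => Nat.div_le_div_right
        (Nat.div_le_div_left (Nat.pow_le_pow_right (by norm_num) (by omega)) (by positivity)))
      m
    rw [this]
    have hz : m / 2^(m+1) / k = 0 := by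
      have : m / 2^(m+1) = 0 := by
        apply Nat.div_eq_of_lt
        calc m < 2 ^ m := Nat.lt_two_pow_self
          _ ≤ 2 ^ (m+1) := Nat.pow_le_pow_right (by omega) (by omega)
      rw [this]; simp
    rw [hz, Nat.sub_zero, pow_one, Nat.div_div_eq_div_mul]
  rw [Finset.prod_congr rfl hinner]
  refine Finset.prod_bij (fun k _ => k - 1) ?_ ?_ ?_ ?_
  · intro k hk
    simp only [Finset.mem_Icc] at hk
    simp only [Finset.mem_range]
    omega
  · intro a ha b hb hab
    simp only [Finset.mem_Icc] at ha hb
    omega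
  · intro j hj
    simp only [Finset.mem_range] at hj
    exact ⟨j+1, by simp only [Finset.mem_Icc]; omega, by simp⟩
  · intro k hk
    simp only [Finset.mem_Icc] at hk
    have : 2 * (k - 1 + 1) = 2 * k := by omega
    rw [this]
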